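/- In LJF, the sequent ↓∀x. ↑!A⁻(x) ⊢ ↑!∀u. A⁻(u) is not derivable. -/
import Mathlib

set_option autoImplicit true

mutual
/-- Negative formulas of focused polarised intuitionistic linear logic LJF,
over term domain `ℕ`; atoms are `natom p args` for predicate symbol `p`. -/
inductive NegF : Type
  | natom : ℕ → List ℕ → NegF
  | lolli : PosF → NegF → NegF
  | all : (ℕ → NegF) → NegF
  | up : PosF → NegF
/-- Positive formulas of LJF. -/
inductive PosF : Type
  | patom : ℕ → List ℕ → PosF
  | tensor : PosF → PosF → PosF
  | bang : NegF → PosF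
  | ex : (ℕ → PosF) → PosF
  | down : NegF → PosF
end

/-- The three judgment forms of LJF: inversion `Γ; Δ ⊢ N`,
left focus `Γ; Δ, [N] ⊢ N'` and right focus `Γ; Δ ⊢ [P]`. -/
inductive LFoc : Type
  | inv : NegF → LFoc
  | left : NegF → NegF → LFoc
  | right : PosF → LFoc

/-- Derivability in LJF (Liang–Miller rules): `LJF Γ Δ J`, with
unrestricted context `Γ` of negative formulas and linear context `Δ`
of positive formulas. -/
inductive LJF : List NegF → Multiset PosF → LFoc → Prop
  | axNeg : LJF Γ 0 (.left (.natom p ts) (.natom p ts))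
  | axPos : LJF Γ {.patom p ts} (.right (.patom p ts))
  | allL : LJF Γ Δ (.left (N t) C) → LJF Γ Δ (.left (.all N) C)
  | allR : (∀ t, LJF Γ Δ (.inv (N t))) → LJF Γ Δ (.inv (.all N))
  | exL : (∀ t, LJF Γ (P t ::ₘ Δ) (.inv C)) → LJF Γ (PosF.ex P ::ₘ Δ) (.inv C)
  | exR : LJF Γ Δ (.right (P t)) → LJF Γ Δ (.right (.ex P))
  | lolliL : LJF Γ Δ₁ (.right P) → LJF Γ Δ₂ (.left N C) →
      LJF Γ (Δ₁ + Δ₂) (.left (.lolli P N) C)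
  | lolliR : LJF Γ (P ::ₘ Δ) (.inv N) → LJF Γ Δ (.inv (.lolli P N))
  | tensorL : LJF Γ (P₁ ::ₘ P₂ ::ₘ Δ) (.inv C) →
      LJF Γ (PosF.tensor P₁ P₂ ::ₘ Δ) (.inv C)
  | tensorR : LJF Γ Δ₁ (.right P₁) → LJF Γ Δ₂ (.right P₂) →
      LJF Γ (Δ₁ + Δ₂) (.right (.tensor P₁ P₂))
  | bangL : LJF (N :: Γ) Δ (.inv C) → LJF Γ (PosF.bang N ::ₘ Δ) (.inv C)
  | bangR : LJF Γ 0 (.inv N) → LJF Γ 0 (.right (.bang N))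
  | copy : N ∈ Γ → LJF Γ Δ (.left N C) → LJF Γ Δ (.inv C)
  | focusL : LJF Γ Δ (.left N C) → LJF Γ (PosF.down N ::ₘ Δ) (.inv C)
  | focusR : LJF Γ Δ (.right P) → LJF Γ Δ (.inv (.up P))
  | blurL : LJF Γ (P ::ₘ Δ) (.inv C) → LJF Γ Δ (.left (.up P) C)
  | blurR : LJF Γ Δ (.inv N) → LJF Γ Δ (.right (.down N))


lemma lemA {Γ Δ p ts C} (h : LJF Γ Δ (.left (.natom p ts) C)) :
    C = .natom p ts ∧ Δ = 0 := by
  cases h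
  exact ⟨rfl, rfl⟩

def Gfml : NegF := .all fun u => .natom 0 [u]
def Ffml : NegF := .all fun x => .up (.bang (.natom 0 [x]))

lemma L5 (t : ℕ) {Δ} (hΔ : Δ = 0) (h : LJF [NegF.natom 0 [t]] Δ (.inv (.natom 0 [t+1]))) :
    False := by
  cases h with
  | copy hm hl =>
      simp at hm
      subst hm
      have := (lemA hl).1
      simp at this
  | exL _ => simp at hΔ
  | tensorL _ => simp at hΔ
  | bangL _ => simp at hΔ
  | focusL _ => simp at hΔ

lemma L4 (t : ℕ) {Δ} (hΔ : Δ = 0) (h : LJF [NegF.natom 0 [t]] Δ (.inv Gfml)) : False := by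
  cases h with
  | allR h => exact L5 t hΔ (h (t + 1))
  | copy hm hl =>
      simp at hm
      subst hm
      have := (lemA hl).1
      simp [Gfml] at this
  | exL _ => simp at hΔ
  | tensorL _ => simp at hΔ
  | bangL _ => simp at hΔ
  | focusL _ => simp at hΔ

lemma L3 {Γ Δ} (h : LJF Γ Δ (.right (.bang Gfml))) : Δ = 0 ∧ LJF Γ 0 (.inv Gfml) := by
  cases h with
  | bangR h => exact ⟨rfl, h⟩

lemma L2 (t : ℕ) {Δ} (hΔ : Δ = 0) (h : LJF [NegF.natom 0 [t]] Δ (.inv (.up (.bang Gfml)))) :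
    False := by
  cases h with
  | focusR h => exact L4 t rfl (L3 h).2
  | copy hm hl =>
      simp at hm
      subst hm
      have := (lemA hl).1
      simp at this
  | exL _ => simp at hΔ
  | tensorL _ => simp at hΔ
  | bangL _ => simp at hΔ
  | focusL _ => simp at hΔ

lemma L2b (t : ℕ) {Δ} (hΔ : Δ = {PosF.bang (.natom 0 [t])})
    (h : LJF [] Δ (.inv (.up (.bang Gfml)))) : False := by
  cases h with
  | focusR h =>
      have := (L3 h).1
      simp [this] at hΔ
  | copy hm _ => simp at hm
  | bangL h =>
      obtain ⟨h1, h2⟩ := (Multiset.singleton_eq_cons_iff _).mp hΔ.symm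
      injection h1 with h1
      subst h1 h2
      exact L2 t rfl h
  | exL _ =>
      obtain ⟨h1, -⟩ := (Multiset.singleton_eq_cons_iff _).mp hΔ.symm
      simp at h1
  | tensorL _ =>
      obtain ⟨h1, -⟩ := (Multiset.singleton_eq_cons_iff _).mp hΔ.symm
      simp at h1
  | focusL _ =>
      obtain ⟨h1, -⟩ := (Multiset.singleton_eq_cons_iff _).mp hΔ.symm
      simp at h1

lemma L1 {Δ} (hΔ : Δ = 0) (h : LJF [] Δ (.left Ffml (.up (.bang Gfml)))) : False := by
  cases h with
  | allL h =>
      cases h with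
      | blurL h =>
          subst hΔ
          exact L2b _ rfl h

theorem stmt5' :
    ¬ LJF []
        {PosF.down (.all fun x => .up (.bang (.natom 0 [x])))}
        (.inv (.up (.bang (.all fun u => .natom 0 [u])))) := by
  intro h
  have h' : LJF [] {PosF.down Ffml} (.inv (.up (.bang Gfml))) := h
  generalize hΔ : ({PosF.down Ffml} : Multiset PosF) = Δ at h'
  cases h' with
  | focusR h =>
      have := (L3 h).1
      simp [this] at hΔ
  | copy hm _ => simp at hm
  | focusL h =>
      obtain ⟨h1, h2⟩ := (Multiset.singleton_eq_cons_iff _).mp hΔ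
      injection h1 with h1
      subst h1 h2
      exact L1 rfl h
  | exL _ =>
      obtain ⟨h1, -⟩ := (Multiset.singleton_eq_cons_iff _).mp hΔ
      simp at h1
  | tensorL _ =>
      obtain ⟨h1, -⟩ := (Multiset.singleton_eq_cons_iff _).mp hΔ
      simp at h1
  | bangL _ =>
      obtain ⟨h1, -⟩ := (Multiset.singleton_eq_cons_iff _).mp hΔ
      simp at h1

/-- The sequent `↓∀x. ↑!A⁻(x) ⊢ ↑!∀u. A⁻(u)` is not derivable in LJF
(with the unary negative atom `A⁻ = natom 0`). -/
theorem stmt5 :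
    ¬ LJF []
        {PosF.down (.all fun x => .up (.bang (.natom 0 [x])))}
        (.inv (.up (.bang (.all fun u => .natom 0 [u])))) := by
  exact stmt5'
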